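/- For every fair-chores instance with exactly 2 agents, there exists a connected allocation A = (A_1, A_2) that is simultaneously MMS (v_i(A_i) >= MMS_i for i = 1, 2) and PROP1, and that moreover satisfies EW(A) = OPT_E, UW(A) >= -1, and UW(A) >= 2 * OPT_U (note OPT_U <= 0). In particular, for two agents the price of MMS and of PROP1 with respect to egalitarian welfare is 1, and with respect to utilitarian welfare is at most 2. -/

import Mathlib

open Finset

noncomputable section

/-- The value of a bundle `S` of items under additive (item-level) valuation `v`. -/
def bundleVal {m : ℕ} (v : Fin m → ℝ) (S : Finset (Fin m)) : ℝ := ∑ e ∈ S, v e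

/-- A bundle is connected if it is an interval of the line `e_1, …, e_m`. -/
def IsConnBundle {m : ℕ} (S : Finset (Fin m)) : Prop :=
  ∀ a ∈ S, ∀ c ∈ S, ∀ b : Fin m, a ≤ b → b ≤ c → b ∈ S

/-- A connected allocation: pairwise disjoint connected bundles covering all items. -/
def ConnAlloc (n m : ℕ) (A : Fin n → Finset (Fin m)) : Prop :=
  (∀ i, IsConnBundle (A i)) ∧
  (∀ i j : Fin n, i ≠ j → Disjoint (A i) (A j)) ∧
  (∀ e : Fin m, ∃ i, e ∈ A i)

/-- The maximin share of an agent with valuation `v`: the maximum over connected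
`n`-partitions of the minimum bundle value. -/
def mmsVal (n m : ℕ) (v : Fin m → ℝ) : ℝ :=
  sSup { x : ℝ | ∃ A : Fin n → Finset (Fin m), ConnAlloc n m A ∧ x = ⨅ j, bundleVal v (A j) }

/-- Utilitarian welfare of an allocation. -/
def utilW (n m : ℕ) (v : Fin n → Fin m → ℝ) (A : Fin n → Finset (Fin m)) : ℝ :=
  ∑ i, bundleVal (v i) (A i)

/-- Egalitarian welfare of an allocation. -/
def egalW (n m : ℕ) (v : Fin n → Fin m → ℝ) (A : Fin n → Finset (Fin m)) : ℝ :=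
  ⨅ i, bundleVal (v i) (A i)

/-- Optimal utilitarian welfare over all connected allocations. -/
def optU (n m : ℕ) (v : Fin n → Fin m → ℝ) : ℝ :=
  sSup { x : ℝ | ∃ A, ConnAlloc n m A ∧ x = utilW n m v A }

/-- Optimal egalitarian welfare over all connected allocations. -/
def optE (n m : ℕ) (v : Fin n → Fin m → ℝ) : ℝ :=
  sSup { x : ℝ | ∃ A, ConnAlloc n m A ∧ x = egalW n m v A }

/-- A connected allocation of chores is PROP1 if every agent's bundle is either empty or
contains an item whose removal keeps the bundle connected and brings the agent's value
up to at least `-1/n`. -/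
def Prop1Chores (n m : ℕ) (v : Fin n → Fin m → ℝ) (A : Fin n → Finset (Fin m)) : Prop :=
  ∀ i, A i = ∅ ∨ ∃ e ∈ A i, IsConnBundle (A i \ {e}) ∧
    -(1 / (n : ℝ)) ≤ bundleVal (v i) (A i \ {e})

namespace ChoresAux

def pre (m k : ℕ) : Finset (Fin m) := Finset.univ.filter (fun e => (e : ℕ) < k)

def suf (m k : ℕ) : Finset (Fin m) := Finset.univ.filter (fun e => ¬ (e : ℕ) < k)

variable {m : ℕ}

lemma mem_pre {k : ℕ} {e : Fin m} : e ∈ pre m k ↔ (e : ℕ) < k := by simp [pre]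

lemma mem_suf {k : ℕ} {e : Fin m} : e ∈ suf m k ↔ ¬ (e : ℕ) < k := by simp [suf]

lemma pre_conn (k : ℕ) : IsConnBundle (pre m k) := by
  intro a ha c hc b h1 h2
  rw [mem_pre] at *
  have := (Fin.le_def).1 h2
  omega

lemma suf_conn (k : ℕ) : IsConnBundle (suf m k) := by
  intro a ha c hc b h1 h2
  rw [mem_suf] at *
  have := (Fin.le_def).1 h1
  omega

lemma pre_disj_suf (k : ℕ) : Disjoint (pre m k) (suf m k) :=
  disjoint_filter_filter_not _ _ _

lemma pre_zero : pre m 0 = ∅ := by ext e; simp [mem_pre]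

lemma suf_top : suf m m = ∅ := by ext e; simp [mem_suf, e.isLt]

lemma pre_top : pre m m = Finset.univ := by ext e; simp [mem_pre, e.isLt]

lemma pre_subset {j k : ℕ} (h : j ≤ k) : pre m j ⊆ pre m k := by
  intro e he; rw [mem_pre] at *; omega

lemma suf_subset {j k : ℕ} (h : j ≤ k) : suf m k ⊆ suf m j := by
  intro e he; rw [mem_suf] at *; omega

lemma pre_sdiff {k : ℕ} (h1 : 1 ≤ k) (h2 : k ≤ m) :
    pre m k \ {(⟨k - 1, by omega⟩ : Fin m)} = pre m (k - 1) := by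
  ext e; simp [mem_pre, pre, Fin.ext_iff]; omega

lemma suf_sdiff {k : ℕ} (h : k < m) :
    suf m k \ {(⟨k, h⟩ : Fin m)} = suf m (k + 1) := by
  ext e; simp [mem_suf, suf, Fin.ext_iff]; omega

lemma bundleVal_nonpos {v : Fin m → ℝ} (hv : ∀ j, v j ≤ 0) (S : Finset (Fin m)) :
    bundleVal v S ≤ 0 :=
  Finset.sum_nonpos (fun e _ => hv e)

lemma bundleVal_subset {v : Fin m → ℝ} (hv : ∀ j, v j ≤ 0) {S T : Finset (Fin m)}
    (h : S ⊆ T) : bundleVal v T ≤ bundleVal v S := by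
  have h2 : ∑ e ∈ T \ S, v e ≤ 0 := Finset.sum_nonpos fun e _ => hv e
  rw [bundleVal, bundleVal, ← Finset.sum_sdiff h]
  linarith

lemma pre_add_suf (v : Fin m → ℝ) (k : ℕ) :
    bundleVal v (pre m k) + bundleVal v (suf m k) = bundleVal v Finset.univ :=
  Finset.sum_filter_add_sum_filter_not _ _ _

lemma bundleVal_empty (v : Fin m → ℝ) : bundleVal v ∅ = 0 := by simp [bundleVal]

def alloc (m k : ℕ) (σ : Fin 2) : Fin 2 → Finset (Fin m) :=
  fun i => if i = σ then pre m k else suf m k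

lemma fin2_cases : ∀ i σ : Fin 2, i = σ ∨ i = 1 - σ := by decide

lemma fin2_sub_sub : ∀ σ : Fin 2, 1 - (1 - σ) = σ := by decide

lemma fin2_sub_ne : ∀ σ : Fin 2, 1 - σ ≠ σ := by decide

lemma alloc_self (k : ℕ) (σ : Fin 2) : alloc m k σ σ = pre m k := if_pos rfl

lemma alloc_other (k : ℕ) (σ : Fin 2) : alloc m k σ (1 - σ) = suf m k :=
  if_neg (fin2_sub_ne σ)

lemma connAlloc_alloc (k : ℕ) (σ : Fin 2) : ConnAlloc 2 m (alloc m k σ) := by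
  refine ⟨?_, ?_, ?_⟩
  · intro i
    by_cases h : i = σ <;> simp only [alloc, h, if_pos, if_neg, if_true, if_false]
    · exact pre_conn k
    · exact suf_conn k
  · intro i j hij
    by_cases hi : i = σ
    · have hj : j ≠ σ := fun h => hij (hi.trans h.symm)
      simp only [alloc, hi, if_pos, hj, if_neg, if_true, if_false]
      exact pre_disj_suf k
    · rcases fin2_cases j σ with rfl | rfl
      · simp only [alloc, hi, if_neg, if_pos, if_true, if_false]
        exact (pre_disj_suf k).symm
      · exact absurd ((fin2_cases i σ).resolve_left hi) hij
  · intro e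
    by_cases h : (e : ℕ) < k
    · exact ⟨σ, by rw [alloc_self, mem_pre]; exact h⟩
    · exact ⟨1 - σ, by rw [alloc_other, mem_suf]; exact h⟩

lemma iInf_fin2 (f : Fin 2 → ℝ) : (⨅ i, f i) = min (f 0) (f 1) := by
  apply le_antisymm
  · exact le_min (ciInf_le (Set.finite_range f).bddBelow 0)
      (ciInf_le (Set.finite_range f).bddBelow 1)
  · refine le_ciInf fun i => ?_
    fin_cases i
    · exact min_le_left _ _
    · exact min_le_right _ _

lemma alloc_char (hm : 0 < m) (A : Fin 2 → Finset (Fin m)) (h : ConnAlloc 2 m A) :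
    ∃ k, k ≤ m ∧ ∃ σ, A = alloc m k σ := by
  obtain ⟨hconn, hdis, hcov⟩ := h
  obtain ⟨i0, h0⟩ := hcov ⟨0, hm⟩
  by_cases hne : A (1 - i0) = ∅
  · have huniv : A i0 = Finset.univ := by
      rw [Finset.eq_univ_iff_forall]
      intro e
      obtain ⟨j, hj⟩ := hcov e
      rcases fin2_cases j i0 with rfl | rfl
      · exact hj
      · rw [hne] at hj; exact absurd hj (Finset.notMem_empty e)
    refine ⟨m, le_rfl, i0, funext fun i => ?_⟩
    rcases fin2_cases i i0 with rfl | rfl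
    · rw [alloc_self, pre_top, huniv]
    · rw [alloc_other, suf_top, hne]
  · have hnemp : (A (1 - i0)).Nonempty := Finset.nonempty_iff_ne_empty.2 hne
    set b := (A (1 - i0)).min' hnemp with hb
    have hbmem : b ∈ A (1 - i0) := Finset.min'_mem _ _
    have hdisj : Disjoint (A i0) (A (1 - i0)) := hdis i0 (1 - i0) (fin2_sub_ne i0).symm
    have claim1 : ∀ e : Fin m, (e : ℕ) < (b : ℕ) → e ∈ A i0 := by
      intro e he
      obtain ⟨j, hj⟩ := hcov e
      rcases fin2_cases j i0 with rfl | rfl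
      · exact hj
      · have := Finset.min'_le _ e hj
        rw [← hb, Fin.le_def] at this
        omega
    have claim2 : ∀ e : Fin m, ¬ (e : ℕ) < (b : ℕ) → e ∈ A (1 - i0) := by
      intro e he
      obtain ⟨j, hj⟩ := hcov e
      rcases fin2_cases j i0 with hji | hji
      · exfalso
        rw [hji] at hj
        have hbin : b ∈ A i0 := by
          refine hconn i0 ⟨0, hm⟩ h0 e hj b ?_ ?_
          · rw [Fin.le_def]; exact Nat.zero_le _
          · rw [Fin.le_def]; omega
        exact (Finset.disjoint_left.1 hdisj hbin) hbmem
      · rw [hji] at hj; exact hj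
    refine ⟨(b : ℕ), le_of_lt b.isLt, i0, funext fun i => ?_⟩
    rcases fin2_cases i i0 with rfl | rfl
    · rw [alloc_self]
      ext e
      rw [mem_pre]
      constructor
      · intro he
        by_contra hc
        exact (Finset.disjoint_left.1 hdisj he) (claim2 e hc)
      · exact claim1 e
    · rw [alloc_other]
      ext e
      rw [mem_suf]
      constructor
      · intro he hc
        exact (Finset.disjoint_left.1 hdisj (claim1 e hc)) he
      · exact claim2 e

end ChoresAux


namespace ChoresAux

variable {m : ℕ}

lemma egalW_le (v : Fin 2 → Fin m → ℝ) (A : Fin 2 → Finset (Fin m)) (i : Fin 2) :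
    egalW 2 m v A ≤ bundleVal (v i) (A i) :=
  ciInf_le (Set.finite_range _).bddBelow i

lemma egalW_alloc (v : Fin 2 → Fin m → ℝ) (k : ℕ) (σ : Fin 2) :
    egalW 2 m v (alloc m k σ) =
      min (bundleVal (v σ) (pre m k)) (bundleVal (v (1 - σ)) (suf m k)) := by
  rw [egalW, iInf_fin2]
  fin_cases σ
  · simp [alloc]
  · simp only [alloc]
    norm_num
    rw [min_comm]

lemma utilW_alloc (v : Fin 2 → Fin m → ℝ) (k : ℕ) (σ : Fin 2) :
    utilW 2 m v (alloc m k σ) =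
      bundleVal (v σ) (pre m k) + bundleVal (v (1 - σ)) (suf m k) := by
  rw [utilW, Fin.sum_univ_two]
  fin_cases σ
  · simp [alloc]
  · simp only [alloc]
    norm_num
    rw [add_comm]

end ChoresAux


namespace ChoresAux

/-- Core selection lemma: given the cut-value profile of an egalitarian-optimal
cut `k0,σ0` with optimum `α`, there is a cut that is still optimal and satisfies
the PROP1 side conditions on both sides. -/
lemma select (m : ℕ) (F G : Fin 2 → ℕ → ℝ) (α : ℝ)
    (hFG : ∀ (i : Fin 2) (k : ℕ), F i k + G i k = -1)
    (hFmono : ∀ (i : Fin 2) (j k : ℕ), j ≤ k → F i k ≤ F i j)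
    (hGmono : ∀ (i : Fin 2) (j k : ℕ), j ≤ k → G i j ≤ G i k)
    (hF0 : ∀ i, F i 0 = 0) (hGm : ∀ i, G i m = 0)
    (hopt : ∀ (k : ℕ) (σ : Fin 2), min (F σ k) (G (1 - σ) k) ≤ α)
    (k0 : ℕ) (hk0 : k0 ≤ m) (σ0 : Fin 2)
    (hα : α = min (F σ0 k0) (G (1 - σ0) k0)) :
    ∃ k, k ≤ m ∧ ∃ σ : Fin 2, min (F σ k) (G (1 - σ) k) = α ∧
      (k = 0 ∨ (1 ≤ k ∧ -(1/2 : ℝ) ≤ F σ (k - 1))) ∧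
      (k = m ∨ (k < m ∧ -(1/2 : ℝ) ≤ G (1 - σ) (k + 1))) := by
  have hFk0 : α ≤ F σ0 k0 := by rw [hα]; exact min_le_left _ _
  have hGk0 : α ≤ G (1 - σ0) k0 := by rw [hα]; exact min_le_right _ _
  by_cases hhalf : -(1/2 : ℝ) ≤ α
  · refine ⟨k0, hk0, σ0, hα.symm, ?_, ?_⟩
    · rcases Nat.eq_zero_or_pos k0 with rfl | h1
      · exact Or.inl rfl
      · exact Or.inr ⟨h1, le_trans hhalf (le_trans hFk0 (hFmono σ0 _ _ (by omega)))⟩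
    · rcases eq_or_lt_of_le hk0 with rfl | h1
      · exact Or.inl rfl
      · exact Or.inr ⟨h1, le_trans hhalf (le_trans hGk0 (hGmono (1-σ0) _ _ (by omega)))⟩
  push_neg at hhalf
  have key_down : ∀ (p : Fin 2) (j : ℕ), F p j < -(1/2:ℝ) →
      F p j ≤ α ∧ -1 - α ≤ G (1 - p) j := by
    intro p j hFj
    have e1 : F p j + G p j = -1 := hFG p j
    have e2 : F (1-p) j + G (1-p) j = -1 := hFG (1-p) j
    have h2 : min (F (1-p) j) (G p j) ≤ α := by
      have := hopt j (1-p)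
      rwa [fin2_sub_sub p] at this
    have h3 : α < G p j := by linarith
    have h4 : F (1-p) j ≤ α := by
      by_contra hc
      push_neg at hc
      have := lt_min hc h3
      linarith
    have h5 : -1 - α ≤ G (1-p) j := by linarith
    have h7 : α < G (1-p) j := by linarith
    have h6 : min (F p j) (G (1-p) j) ≤ α := hopt j p
    have h8 : F p j ≤ α := by
      by_contra hc
      push_neg at hc
      have := lt_min hc h7
      linarith
    exact ⟨h8, h5⟩
  have key_up : ∀ (q : Fin 2) (j : ℕ), G q j < -(1/2:ℝ) →
      G q j ≤ α ∧ -1 - α ≤ F (1 - q) j := by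
    intro q j hGj
    have e1 : F q j + G q j = -1 := hFG q j
    have e2 : F (1-q) j + G (1-q) j = -1 := hFG (1-q) j
    have h3 : α < F q j := by linarith
    have h2 : min (F q j) (G (1-q) j) ≤ α := hopt j q
    have h4 : G (1-q) j ≤ α := by
      by_contra hc
      push_neg at hc
      have := lt_min h3 hc
      linarith
    have h5 : -1 - α ≤ F (1-q) j := by linarith
    have h7 : α < F (1-q) j := by linarith
    have h6 : min (F (1-q) j) (G q j) ≤ α := by
      have := hopt j (1-q)
      rwa [fin2_sub_sub q] at this
    have h8 : G q j ≤ α := by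
      by_contra hc
      push_neg at hc
      have := lt_min h7 hc
      linarith
    exact ⟨h8, h5⟩
  have down : ∀ (p : Fin 2) (j0 : ℕ), α ≤ F p j0 → F p (j0-1) < -(1/2:ℝ) →
      ∃ j, 1 ≤ j ∧ j ≤ j0 - 1 ∧ F p j = α ∧ -(1/2:ℝ) ≤ F p (j-1) ∧ -1 - α ≤ G (1-p) j := by
    intro p j0
    induction j0 using Nat.strong_induction_on with
    | _ j0 ih =>
      intro hge hlt
      have hj1 : 1 ≤ j0 := by
        by_contra hc
        push_neg at hc
        have hz : j0 = 0 := by omega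
        subst hz
        have h0 : (0:ℕ) - 1 = 0 := rfl
        rw [h0, hF0 p] at hlt
        norm_num at hlt
      obtain ⟨h8, h5⟩ := key_down p (j0-1) hlt
      have heq : F p (j0-1) = α := le_antisymm h8 (le_trans hge (hFmono p _ _ (by omega)))
      have hj2 : 1 ≤ j0 - 1 := by
        by_contra hc
        push_neg at hc
        have hz : j0 - 1 = 0 := by omega
        rw [hz, hF0 p] at heq
        linarith
      by_cases hstop : -(1/2:ℝ) ≤ F p (j0-1-1)
      · exact ⟨j0-1, hj2, le_rfl, heq, hstop, h5⟩
      · push_neg at hstop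
        obtain ⟨j, a1, a2, a3, a4, a5⟩ := ih (j0-1) (by omega) (le_of_eq heq.symm) hstop
        exact ⟨j, a1, by omega, a3, a4, a5⟩
  have up : ∀ (q : Fin 2) (d j0 : ℕ), m - j0 ≤ d → j0 + 1 ≤ m → α ≤ G q j0 →
      G q (j0+1) < -(1/2:ℝ) →
      ∃ j, j0 + 1 ≤ j ∧ j + 1 ≤ m ∧ G q j = α ∧ -(1/2:ℝ) ≤ G q (j+1) ∧ -1 - α ≤ F (1-q) j := by
    intro q d
    induction d with
    | zero =>
      intro j0 hd hj0 _ _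
      exact absurd hj0 (by omega)
    | succ d ih =>
      intro j0 hd hj0 hge hlt
      obtain ⟨h8, h5⟩ := key_up q (j0+1) hlt
      have heq : G q (j0+1) = α := le_antisymm h8 (le_trans hge (hGmono q _ _ (by omega)))
      have hj2 : j0 + 1 + 1 ≤ m := by
        rcases Nat.lt_or_ge (j0+1) m with h | h
        · omega
        · exfalso
          have hem : j0 + 1 = m := by omega
          rw [hem, hGm q] at heq
          linarith
      by_cases hstop : -(1/2:ℝ) ≤ G q (j0+1+1)
      · exact ⟨j0+1, le_rfl, hj2, heq, hstop, h5⟩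
      · push_neg at hstop
        obtain ⟨j, a1, a2, a3, a4, a5⟩ := ih (j0+1) (by omega) hj2 (le_of_eq heq.symm) hstop
        exact ⟨j, by omega, a2, a3, a4, a5⟩
  by_cases hB1 : 1 ≤ k0 ∧ F σ0 (k0-1) < -(1/2:ℝ)
  · obtain ⟨j, hj1, hj2, hj3, hj4, hj5⟩ := down σ0 k0 hFk0 hB1.2
    have hjm : j < m := by omega
    refine ⟨j, by omega, σ0, ?_, Or.inr ⟨hj1, hj4⟩, Or.inr ⟨hjm, ?_⟩⟩
    · rw [hj3]
      exact min_eq_left (by linarith)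
    · have := hGmono (1-σ0) j (j+1) (by omega)
      linarith
  push_neg at hB1
  by_cases hB2 : k0 + 1 ≤ m ∧ G (1-σ0) (k0+1) < -(1/2:ℝ)
  · obtain ⟨j, hj1, hj2, hj3, hj4, hj5⟩ := up (1-σ0) (m - k0) k0 le_rfl hB2.1 hGk0 hB2.2
    rw [fin2_sub_sub σ0] at hj5
    refine ⟨j, by omega, σ0, ?_, Or.inr ⟨by omega, ?_⟩, Or.inr ⟨by omega, hj4⟩⟩
    · rw [hj3]
      exact min_eq_right (by linarith)
    · have := hFmono σ0 (j-1) j (by omega)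
      linarith
  push_neg at hB2
  refine ⟨k0, hk0, σ0, hα.symm, ?_, ?_⟩
  · rcases Nat.eq_zero_or_pos k0 with rfl | h1
    · exact Or.inl rfl
    · exact Or.inr ⟨h1, hB1 h1⟩
  · rcases eq_or_lt_of_le hk0 with rfl | h1
    · exact Or.inl rfl
    · exact Or.inr ⟨h1, hB2 h1⟩

end ChoresAux


namespace ChoresAux

lemma iInf_alloc {m : ℕ} (w : Fin m → ℝ) (k : ℕ) (σ : Fin 2) :
    (⨅ j, bundleVal w (alloc m k σ j)) =
      min (bundleVal w (pre m k)) (bundleVal w (suf m k)) := by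
  rw [iInf_fin2]
  fin_cases σ
  · simp [alloc]
  · simp only [alloc]
    norm_num
    rw [min_comm]

end ChoresAux

open ChoresAux

/-- For every fair-chores instance with two agents, there exists a
connected allocation that is simultaneously MMS and PROP1, maximizes the egalitarian
welfare, and has utilitarian welfare at least `-1` and at least `2 · OPT_U`
(note `OPT_U ≤ 0`). -/
theorem chores_two_agents (m : ℕ) (v : Fin 2 → Fin m → ℝ)
    (hneg : ∀ i j, v i j ≤ 0)
    (hnorm : ∀ i, bundleVal (v i) Finset.univ = -1) :
    ∃ A : Fin 2 → Finset (Fin m), ConnAlloc 2 m A ∧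
      (∀ i, mmsVal 2 m (v i) ≤ bundleVal (v i) (A i)) ∧
      Prop1Chores 2 m v A ∧
      egalW 2 m v A = optE 2 m v ∧
      (-1 : ℝ) ≤ utilW 2 m v A ∧
      (2 : ℝ) * optU 2 m v ≤ utilW 2 m v A := by
  classical
  rcases Nat.eq_zero_or_pos m with hm0 | hm
  · exfalso
    have h := hnorm 0
    subst hm0
    rw [bundleVal, Finset.univ_eq_empty, Finset.sum_empty] at h
    norm_num at h
  -- basic valuation facts
  have hFG : ∀ (i : Fin 2) (k : ℕ),
      bundleVal (v i) (pre m k) + bundleVal (v i) (suf m k) = -1 := by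
    intro i k
    rw [pre_add_suf, hnorm i]
  have hFmono : ∀ (i : Fin 2) (j k : ℕ), j ≤ k →
      bundleVal (v i) (pre m k) ≤ bundleVal (v i) (pre m j) :=
    fun i j k h => bundleVal_subset (hneg i) (pre_subset h)
  have hGmono : ∀ (i : Fin 2) (j k : ℕ), j ≤ k →
      bundleVal (v i) (suf m j) ≤ bundleVal (v i) (suf m k) :=
    fun i j k h => bundleVal_subset (hneg i) (suf_subset h)
  have hF0 : ∀ i : Fin 2, bundleVal (v i) (pre m 0) = 0 := by
    intro i; rw [pre_zero, bundleVal_empty]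
  have hGm : ∀ i : Fin 2, bundleVal (v i) (suf m m) = 0 := by
    intro i; rw [suf_top, bundleVal_empty]
  -- an egalitarian-optimal cut
  obtain ⟨⟨kf, σ0⟩, hmax⟩ := Finite.exists_max
    (fun y : Fin (m+1) × Fin 2 => egalW 2 m v (alloc m (y.1 : ℕ) y.2))
  set α := egalW 2 m v (alloc m (kf : ℕ) σ0) with hαdef
  have hoptA : ∀ (B : Fin 2 → Finset (Fin m)), ConnAlloc 2 m B → egalW 2 m v B ≤ α := by
    intro B hB
    obtain ⟨k, hk, σ, rfl⟩ := alloc_char hm B hB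
    exact hmax (⟨k, by omega⟩, σ)
  have hoptm : ∀ (k : ℕ) (σ : Fin 2),
      min (bundleVal (v σ) (pre m k)) (bundleVal (v (1-σ)) (suf m k)) ≤ α := by
    intro k σ
    rw [← egalW_alloc]
    exact hoptA _ (connAlloc_alloc k σ)
  have hαmin : α = min (bundleVal (v σ0) (pre m (kf:ℕ)))
      (bundleVal (v (1-σ0)) (suf m (kf:ℕ))) := by
    rw [hαdef, egalW_alloc]
  have hset_nonempty : { x : ℝ | ∃ A, ConnAlloc 2 m A ∧ x = egalW 2 m v A }.Nonempty :=
    ⟨egalW 2 m v (alloc m 0 0), ⟨alloc m 0 0, connAlloc_alloc 0 0, rfl⟩⟩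
  have hset_bdd : BddAbove { x : ℝ | ∃ A, ConnAlloc 2 m A ∧ x = egalW 2 m v A } := by
    refine ⟨0, ?_⟩
    rintro x ⟨B, hB, rfl⟩
    exact le_trans (egalW_le v B 0) (bundleVal_nonpos (hneg 0) _)
  have hEopt : optE 2 m v = α := by
    apply le_antisymm
    · apply csSup_le hset_nonempty
      rintro x ⟨B, hB, rfl⟩
      exact hoptA B hB
    · exact le_csSup hset_bdd ⟨alloc m (kf:ℕ) σ0, connAlloc_alloc _ _, hαdef⟩
  -- maximin shares are at most α
  have hmms : ∀ i : Fin 2, mmsVal 2 m (v i) ≤ α := by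
    intro i
    refine csSup_le ⟨_, ⟨alloc m 0 0, connAlloc_alloc 0 0, rfl⟩⟩ ?_
    rintro x ⟨B, hB, rfl⟩
    obtain ⟨k, hk, σ, rfl⟩ := alloc_char hm B hB
    rw [iInf_alloc]
    have hab : bundleVal (v i) (pre m k) + bundleVal (v i) (suf m k) = -1 := hFG i k
    have hxa : min (bundleVal (v i) (pre m k)) (bundleVal (v i) (suf m k)) ≤
        bundleVal (v i) (pre m k) := min_le_left _ _
    have hxb : min (bundleVal (v i) (pre m k)) (bundleVal (v i) (suf m k)) ≤
        bundleVal (v i) (suf m k) := min_le_right _ _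
    have hxhalf : min (bundleVal (v i) (pre m k)) (bundleVal (v i) (suf m k)) ≤
        -(1/2 : ℝ) := by
      rcases le_total (bundleVal (v i) (pre m k)) (bundleVal (v i) (suf m k)) with h | h
      · rw [min_eq_left h]; linarith
      · rw [min_eq_right h]; linarith
    have hsum' : bundleVal (v (1-i)) (pre m k) + bundleVal (v (1-i)) (suf m k) = -1 :=
      hFG (1-i) k
    rcases le_total (-(1/2:ℝ)) (bundleVal (v (1-i)) (suf m k)) with h | h
    · have h2 := hoptm k i
      have hle : min (bundleVal (v i) (pre m k)) (bundleVal (v i) (suf m k)) ≤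
          min (bundleVal (v i) (pre m k)) (bundleVal (v (1-i)) (suf m k)) :=
        le_min hxa (le_trans hxhalf h)
      exact le_trans hle h2
    · have hpre : -(1/2:ℝ) ≤ bundleVal (v (1-i)) (pre m k) := by linarith
      have h2 := hoptm k (1-i)
      rw [fin2_sub_sub i] at h2
      have hle : min (bundleVal (v i) (pre m k)) (bundleVal (v i) (suf m k)) ≤
          min (bundleVal (v (1-i)) (pre m k)) (bundleVal (v i) (suf m k)) :=
        le_min (le_trans hxhalf hpre) hxb
      exact le_trans hle h2
  -- select a good optimal cut
  obtain ⟨k, hk, σ, hmin, hp, hq⟩ := select m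
      (fun i k => bundleVal (v i) (pre m k))
      (fun i k => bundleVal (v i) (suf m k)) α
      hFG hFmono hGmono hF0 hGm hoptm
      (kf : ℕ) (Nat.lt_succ_iff.mp kf.isLt) σ0 hαmin
  have hmin' : min (bundleVal (v σ) (pre m k)) (bundleVal (v (1-σ)) (suf m k)) = α := hmin
  have hFa : α ≤ bundleVal (v σ) (pre m k) := by
    rw [← hmin']; exact min_le_left _ _
  have hGa : α ≤ bundleVal (v (1-σ)) (suf m k) := by
    rw [← hmin']; exact min_le_right _ _
  refine ⟨alloc m k σ, connAlloc_alloc k σ, ?_, ?_, ?_, ?_, ?_⟩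
  · -- MMS
    intro i
    refine le_trans (hmms i) ?_
    have h1 := egalW_le v (alloc m k σ) i
    have heg : egalW 2 m v (alloc m k σ) = α := by
      rw [egalW_alloc]; exact hmin'
    linarith
  · -- PROP1
    intro i
    rcases fin2_cases i σ with h | h
    · rw [h, alloc_self]
      rcases hp with rfl | ⟨h1, h2⟩
      · left; exact pre_zero
      · right
        refine ⟨⟨k-1, by omega⟩, ?_, ?_, ?_⟩
        · rw [mem_pre]; show k - 1 < k; omega
        · rw [pre_sdiff h1 hk]; exact pre_conn _
        · rw [pre_sdiff h1 hk]
          have h2' : -(1/2 : ℝ) ≤ bundleVal (v σ) (pre m (k-1)) := h2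
          push_cast
          linarith
    · rw [h, alloc_other]
      rcases hq with rfl | ⟨h1, h2⟩
      · left; exact suf_top
      · right
        refine ⟨⟨k, h1⟩, ?_, ?_, ?_⟩
        · rw [mem_suf]; show ¬ k < k; omega
        · rw [suf_sdiff h1]; exact suf_conn _
        · rw [suf_sdiff h1]
          have h2' : -(1/2 : ℝ) ≤ bundleVal (v (1-σ)) (suf m (k+1)) := h2
          push_cast
          linarith
  · -- egalitarian optimality
    rw [hEopt, egalW_alloc]
    exact hmin'
  · -- utilitarian welfare at least -1
    rw [utilW_alloc]
    have hswap : bundleVal (v σ) (suf m k) ≤ bundleVal (v (1-σ)) (suf m k) := by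
      by_contra hc
      push_neg at hc
      have h2 := hoptm k (1-σ)
      rw [fin2_sub_sub σ] at h2
      have e1 := hFG σ k
      have e2 := hFG (1-σ) k
      have hlt : α < min (bundleVal (v (1-σ)) (pre m k)) (bundleVal (v σ) (suf m k)) := by
        apply lt_min
        · linarith
        · linarith
      linarith
    have e1 := hFG σ k
    linarith
  · -- utilitarian welfare at least 2 · optU
    have hUle : optU 2 m v ≤ α := by
      refine csSup_le ⟨_, ⟨alloc m 0 0, connAlloc_alloc 0 0, rfl⟩⟩ ?_
      rintro x ⟨B, hB, rfl⟩
      have h0 : bundleVal (v 0) (B 0) ≤ 0 := bundleVal_nonpos (hneg 0) _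
      have h1 : bundleVal (v 1) (B 1) ≤ 0 := bundleVal_nonpos (hneg 1) _
      have hEB := hoptA B hB
      have hEB2 : egalW 2 m v B =
          min (bundleVal (v 0) (B 0)) (bundleVal (v 1) (B 1)) := by
        rw [egalW, iInf_fin2]
      rw [utilW, Fin.sum_univ_two]
      rcases le_total (bundleVal (v 0) (B 0)) (bundleVal (v 1) (B 1)) with h | h
      · rw [min_eq_left h] at hEB2; linarith
      · rw [min_eq_right h] at hEB2; linarith
    rw [utilW_alloc]
    linarith
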